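/- For m ≥ 3 and i ≥ 3, the number of dominating sets of size i in the lollipop graph L_{m,2} equals C(m+1,i−1) + C(m,i−1). -/
import Mathlib


/-- A finite set of vertices dominates the graph. -/
def Dominates {V : Type*} (G : SimpleGraph V) (U : Finset V) : Prop :=
  ∀ v : V, v ∈ U ∨ ∃ u ∈ U, G.Adj u v

/-- The number of dominating sets of size `i`. -/
noncomputable def domCount {V : Type*} [Fintype V] (G : SimpleGraph V) (i : ℕ) : ℕ :=
  Nat.card {U : Finset V // U.card = i ∧ Dominates G U}

/-- The asymmetric adjacency relation of the lollipop graph `L_{m,n}`: a complete graph on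
`Fin m`, a path on `Fin n`, and an edge joining vertex `0` of the complete graph to
the endpoint `0` of the path. -/
def lollipopRel {m n : ℕ} : (Fin m ⊕ Fin n) → (Fin m ⊕ Fin n) → Prop
  | .inl a, .inl b => a ≠ b
  | .inl a, .inr i => (a : ℕ) = 0 ∧ (i : ℕ) = 0
  | .inr i, .inr j => (i : ℕ) + 1 = (j : ℕ)
  | _, _ => False

/-- The `(m,n)`-lollipop graph. -/
def lollipop (m n : ℕ) : SimpleGraph (Fin m ⊕ Fin n) :=
  SimpleGraph.fromRel lollipopRel

open Finset

theorem domCount_lollipop_two (m i : ℕ) (hm : 3 ≤ m) (hi : 3 ≤ i) :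
    domCount (lollipop m 2) i = Nat.choose (m + 1) (i - 1) + Nat.choose m (i - 1) := by
  classical
  -- characterize domination
  have key : ∀ U : Finset (Fin m ⊕ Fin 2),
      Dominates (lollipop m 2) U ↔
      ((∃ a : Fin m, Sum.inl a ∈ U) ∧ (Sum.inr 0 ∈ U ∨ Sum.inr 1 ∈ U)) := by
    intro U
    constructor
    · intro h
      constructor
      · rcases h (Sum.inl ⟨1, by omega⟩) with h1 | ⟨u, hu, hadj⟩
        · exact ⟨_, h1⟩
        · match u with
          | Sum.inl a => exact ⟨a, hu⟩
          | Sum.inr j =>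
            exfalso
            simp [lollipop, lollipopRel, SimpleGraph.fromRel_adj] at hadj
      · rcases h (Sum.inr 1) with h1 | ⟨u, hu, hadj⟩
        · exact Or.inr h1
        · match u with
          | Sum.inl a =>
            exfalso
            simp [lollipop, lollipopRel, SimpleGraph.fromRel_adj] at hadj
          | Sum.inr j =>
            have hj2 : (j : ℕ) < 2 := j.isLt
            simp [lollipop, lollipopRel, SimpleGraph.fromRel_adj] at hadj
            have hj0 : j = 0 := by
              rcases hadj.2 with h' | h' <;> [skip; omega]
              exact Fin.ext (by omega)
            rw [hj0] at hu
            exact Or.inl hu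
    · rintro ⟨⟨a, ha⟩, hb⟩
      intro v
      match v with
      | Sum.inl b =>
        by_cases hab : b = a
        · left; rw [hab]; exact ha
        · right
          refine ⟨Sum.inl a, ha, ?_⟩
          simp only [lollipop, SimpleGraph.fromRel_adj, lollipopRel]
          exact ⟨by simpa using fun hcon => hab hcon.symm, Or.inl fun hcon => hab hcon.symm⟩
      | Sum.inr j =>
        have hj2 : (j : ℕ) < 2 := j.isLt
        have hj' : (j : ℕ) = 0 ∨ (j : ℕ) = 1 := by omega
        have hj : j = 0 ∨ j = 1 := by
          rcases hj' with h' | h'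
          · exact Or.inl (Fin.ext h')
          · exact Or.inr (Fin.ext h')
        rcases hj with rfl | rfl
        · rcases hb with h0 | h1
          · exact Or.inl h0
          · right
            refine ⟨Sum.inr 1, h1, ?_⟩
            simp [lollipop, lollipopRel, SimpleGraph.fromRel_adj]
        · rcases hb with h0 | h1
          · right
            refine ⟨Sum.inr 0, h0, ?_⟩
            simp [lollipop, lollipopRel, SimpleGraph.fromRel_adj]
          · exact Or.inl h1
  -- move to a Finset count
  set sL : Finset (Fin m ⊕ Fin 2) := univ.image Sum.inl with hsL
  have hsLcard : sL.card = m := by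
    rw [hsL, card_image_of_injective _ Sum.inl_injective, card_univ, Fintype.card_fin]
  have h1 : domCount (lollipop m 2) i
      = ((univ.powersetCard i).filter (fun U => Dominates (lollipop m 2) U)).card := by
    rw [domCount, Nat.card_eq_fintype_card, Fintype.card_subtype]
    congr 1
    ext U
    simp [mem_powersetCard_univ]
  have h2 : (univ.powersetCard i).filter (fun U => Dominates (lollipop m 2) U)
      = (univ.powersetCard i).filter (fun U => ¬ U ⊆ sL) := by
    apply filter_congr
    intro U hU
    rw [mem_powersetCard_univ] at hU
    rw [key U]
    constructor
    · rintro ⟨_, hb⟩ hsub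
      rcases hb with h | h
      · have := hsub h; simp [hsL] at this
      · have := hsub h; simp [hsL] at this
    · intro hn
      constructor
      · by_contra hno
        push_neg at hno
        have hsub : U ⊆ univ.image (Sum.inr : Fin 2 → Fin m ⊕ Fin 2) := by
          intro x hx
          match x with
          | Sum.inl a => exact absurd hx (hno a)
          | Sum.inr j => simp
        have hle := card_le_card hsub
        have hc2 : (univ.image (Sum.inr : Fin 2 → Fin m ⊕ Fin 2)).card = 2 := by
          rw [card_image_of_injective _ Sum.inr_injective, card_univ, Fintype.card_fin]
        omega
      · rcases not_subset.mp hn with ⟨x, hx, hxs⟩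
        match x with
        | Sum.inl a => exact absurd (by simp [hsL]) hxs
        | Sum.inr j =>
          have hj2 : (j : ℕ) < 2 := j.isLt
          have hj' : (j : ℕ) = 0 ∨ (j : ℕ) = 1 := by omega
          have hj : j = 0 ∨ j = 1 := by
            rcases hj' with h' | h'
            · exact Or.inl (Fin.ext h')
            · exact Or.inr (Fin.ext h')
          rcases hj with rfl | rfl
          · exact Or.inl hx
          · exact Or.inr hx
  have h3 : ((univ.powersetCard i).filter (fun U => U ⊆ sL)) = sL.powersetCard i := by
    ext U
    simp only [mem_filter, mem_powersetCard_univ, mem_powersetCard, subset_univ, true_and]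
    tauto
  have hsplit := card_filter_add_card_filter_not
    (s := (univ.powersetCard i : Finset (Finset (Fin m ⊕ Fin 2))))
    (p := fun U => U ⊆ sL)
  rw [h3, card_powersetCard, hsLcard] at hsplit
  have hT : (univ.powersetCard i : Finset (Finset (Fin m ⊕ Fin 2))).card
      = (m + 2).choose i := by
    rw [card_powersetCard, card_univ]
    simp [Fintype.card_sum]
  rw [h1, h2]
  obtain ⟨j, rfl⟩ : ∃ j, i = j + 1 := ⟨i - 1, by omega⟩
  have p1 : (m + 2).choose (j + 1) = (m + 1).choose j + (m + 1).choose (j + 1) :=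
    Nat.choose_succ_succ _ _
  have p2 : (m + 1).choose (j + 1) = m.choose j + m.choose (j + 1) :=
    Nat.choose_succ_succ _ _
  simp only [Nat.add_sub_cancel]
  omega
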